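/- Let q ≤ −1 and φ, ψ non-negative convex functions on ℝⁿ with finite normalized dual quermassintegrals W̄_{n−q}(φ) = (∫ φ^{−q} dγₙ)^{−1/q} and W̄_{n−q}(ψ). Then for t ∈ (0,1), W̄_{n−q}((φ(1−t)) □ (ψ t)) ≤ (1−t) W̄_{n−q}(φ) + t W̄_{n−q}(ψ). -/

import Mathlib

open MeasureTheory
open scoped RealInnerProductSpace
open scoped ENNReal NNReal

/-- The Gaussian probability measure `dγₙ(x) = (2π)^{-n/2} e^{-|x|²/2} dx` on `ℝⁿ`. -/
noncomputable def gaussE (n : ℕ) : Measure (EuclideanSpace ℝ (Fin n)) :=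
  volume.withDensity fun x =>
    ENNReal.ofReal ((2 * Real.pi) ^ (-(n : ℝ) / 2) * Real.exp (-‖x‖ ^ 2 / 2))

/-- Infimal convolution of real-valued functions. -/
noncomputable def infConvR {n : ℕ} (φ ψ : EuclideanSpace ℝ (Fin n) → ℝ)
    (x : EuclideanSpace ℝ (Fin n)) : ℝ :=
  ⨅ y : EuclideanSpace ℝ (Fin n), (φ (x - y) + ψ y)

/-- Right scalar multiplication `(φ s)(x) = s φ(x/s)`. -/
noncomputable def scalR {n : ℕ} (s : ℝ) (φ : EuclideanSpace ℝ (Fin n) → ℝ)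
    (x : EuclideanSpace ℝ (Fin n)) : ℝ :=
  s * φ (s⁻¹ • x)

set_option maxHeartbeats 1000000 in
/-- Brunn–Minkowski type inequality for the normalized dual quermassintegrals:
for `q ≤ −1` and nonnegative convex `φ, ψ`,
`W̄_{n−q}((φ(1−t)) □ (ψ t)) ≤ (1−t) W̄_{n−q}(φ) + t W̄_{n−q}(ψ)`. -/
theorem normalized_dual_quermass_BM {n : ℕ} (q : ℝ) (hq : q ≤ -1)
    (t : ℝ) (ht0 : 0 < t) (ht1 : t < 1)
    (φ ψ : EuclideanSpace ℝ (Fin n) → ℝ)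
    (hφc : ConvexOn ℝ Set.univ φ) (hψc : ConvexOn ℝ Set.univ ψ)
    (hφ0 : ∀ x, 0 ≤ φ x) (hψ0 : ∀ x, 0 ≤ ψ x)
    (hφi : Integrable (fun x => φ x ^ (-q)) (gaussE n))
    (hψi : Integrable (fun x => ψ x ^ (-q)) (gaussE n)) :
    (∫ x, infConvR (scalR (1 - t) φ) (scalR t ψ) x ^ (-q) ∂gaussE n) ^ (-1 / q)
      ≤ (1 - t) * (∫ x, φ x ^ (-q) ∂gaussE n) ^ (-1 / q)
        + t * (∫ x, ψ x ^ (-q) ∂gaussE n) ^ (-1 / q) := by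
  set μ := gaussE n
  set p : ℝ := -q with hpdef
  have hp1 : 1 ≤ p := by simp [hpdef]; linarith
  have hp0 : 0 < p := lt_of_lt_of_le one_pos hp1
  have ht0' : 0 < 1 - t := by linarith
  -- continuity of φ, ψ
  have hφcont : Continuous φ := by
    rw [← continuousOn_univ]; exact hφc.continuousOn isOpen_univ
  have hψcont : Continuous ψ := by
    rw [← continuousOn_univ]; exact hψc.continuousOn isOpen_univ
  set g : EuclideanSpace ℝ (Fin n) → ℝ := fun x => (1 - t) * φ x + t * ψ x with hgdef
  have hg0 : ∀ x, 0 ≤ g x := fun x =>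
    add_nonneg (mul_nonneg ht0'.le (hφ0 x)) (mul_nonneg ht0.le (hψ0 x))
  -- pointwise: infConv ≤ g
  have h0 : ∀ x, 0 ≤ infConvR (scalR (1 - t) φ) (scalR t ψ) x := by
    intro x
    refine le_ciInf fun y => add_nonneg ?_ ?_
    · exact mul_nonneg ht0'.le (hφ0 _)
    · exact mul_nonneg ht0.le (hψ0 _)
  have hpt : ∀ x, infConvR (scalR (1 - t) φ) (scalR t ψ) x ≤ g x := by
    intro x
    have hbdd : BddBelow (Set.range fun y => scalR (1 - t) φ (x - y) + scalR t ψ y) := by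
      refine ⟨0, ?_⟩
      rintro _ ⟨y, rfl⟩
      exact add_nonneg (mul_nonneg ht0'.le (hφ0 _)) (mul_nonneg ht0.le (hψ0 _))
    have := ciInf_le hbdd (t • x)
    refine this.trans_eq ?_
    have h1 : x - t • x = (1 - t) • x := by
      rw [sub_smul, one_smul]
    simp only [scalR, h1, smul_smul, inv_mul_cancel₀ ht0'.ne',
      inv_mul_cancel₀ ht0.ne', one_smul, hgdef]
  -- pointwise: g^p ≤ (1-t) φ^p + t ψ^p
  have hconv : ∀ x, g x ^ p ≤ (1 - t) * φ x ^ p + t * ψ x ^ p := by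
    intro x
    have := (convexOn_rpow hp1).2 (Set.mem_Ici.2 (hφ0 x)) (Set.mem_Ici.2 (hψ0 x))
      ht0'.le ht0.le (by ring)
    simpa [smul_eq_mul] using this
  -- integrability of g^p
  have hgcont : Continuous g := by continuity
  have hgmeas : Continuous fun x => g x ^ p :=
    hgcont.rpow_const fun x => Or.inr hp0.le
  have hsumI : Integrable (fun x => (1 - t) * φ x ^ p + t * ψ x ^ p) μ :=
    (hφi.const_mul (1 - t)).add (hψi.const_mul t)
  have hgi : Integrable (fun x => g x ^ p) μ := by
    refine Integrable.mono hsumI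
      hgmeas.aestronglyMeasurable (ae_of_all _ fun x => ?_)
    rw [Real.norm_eq_abs, abs_of_nonneg (Real.rpow_nonneg (hg0 x) p), Real.norm_eq_abs,
      abs_of_nonneg (add_nonneg (mul_nonneg ht0'.le (Real.rpow_nonneg (hφ0 x) p))
        (mul_nonneg ht0.le (Real.rpow_nonneg (hψ0 x) p)))]
    exact hconv x
  -- step 1 : integral mono then rpow mono
  have hint1 : ∫ x, infConvR (scalR (1 - t) φ) (scalR t ψ) x ^ p ∂μ ≤ ∫ x, g x ^ p ∂μ := by
    refine integral_mono_of_nonneg (ae_of_all _ fun x => Real.rpow_nonneg (h0 x) p) hgi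
      (ae_of_all _ fun x => Real.rpow_le_rpow (h0 x) (hpt x) hp0.le)
  have hqne : q ≠ 0 := by linarith
  have hq0 : -1 / q = p⁻¹ := by
    rw [hpdef]; field_simp
  rw [hq0]
  have step1 : (∫ x, infConvR (scalR (1 - t) φ) (scalR t ψ) x ^ p ∂μ) ^ p⁻¹
      ≤ (∫ x, g x ^ p ∂μ) ^ p⁻¹ :=
    Real.rpow_le_rpow (integral_nonneg fun x => Real.rpow_nonneg (h0 x) p) hint1
      (inv_nonneg.2 hp0.le)
  refine step1.trans ?_
  -- step 2: Minkowski
  set P : ℝ≥0∞ := ENNReal.ofReal p with hPdef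
  have hP0 : P ≠ 0 := by simp [hPdef, hp0]
  have hPtop : P ≠ ∞ := ENNReal.ofReal_ne_top
  have hPt : P.toReal = p := ENNReal.toReal_ofReal hp0.le
  have hP1 : 1 ≤ P := by
    rw [hPdef, ← ENNReal.ofReal_one]; exact ENNReal.ofReal_le_ofReal hp1
  have memp : ∀ (f : EuclideanSpace ℝ (Fin n) → ℝ), Continuous f → (∀ x, 0 ≤ f x) →
      Integrable (fun x => f x ^ p) μ → MemLp f P μ := by
    intro f hfc hf0 hfi
    rw [← memLp_norm_rpow_iff (p := P) (q := P) (μ := μ) hfc.aestronglyMeasurable hP0 hPtop,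
      ENNReal.div_self hP0 hPtop, memLp_one_iff_integrable]
    have heq : (fun x => ‖f x‖ ^ P.toReal) = fun x => f x ^ p := by
      ext x; rw [hPt, Real.norm_eq_abs, abs_of_nonneg (hf0 x)]
    rw [heq]; exact hfi
  have hφm : MemLp φ P μ := memp φ hφcont hφ0 hφi
  have hψm : MemLp ψ P μ := memp ψ hψcont hψ0 hψi
  have hgm : MemLp g P μ := memp g hgcont hg0 hgi
  -- eLpNorm identities
  have heφ : eLpNorm φ P μ = ENNReal.ofReal ((∫ x, φ x ^ p ∂μ) ^ p⁻¹) := by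
    rw [hφm.eLpNorm_eq_integral_rpow_norm hP0 hPtop, hPt]
    congr 1
    congr 1
    exact integral_congr_ae (ae_of_all _ fun x => by
      simp only [Real.norm_eq_abs, abs_of_nonneg (hφ0 x)])
  have heψ : eLpNorm ψ P μ = ENNReal.ofReal ((∫ x, ψ x ^ p ∂μ) ^ p⁻¹) := by
    rw [hψm.eLpNorm_eq_integral_rpow_norm hP0 hPtop, hPt]
    congr 1
    congr 1
    exact integral_congr_ae (ae_of_all _ fun x => by
      simp only [Real.norm_eq_abs, abs_of_nonneg (hψ0 x)])
  have heg : eLpNorm g P μ = ENNReal.ofReal ((∫ x, g x ^ p ∂μ) ^ p⁻¹) := by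
    rw [hgm.eLpNorm_eq_integral_rpow_norm hP0 hPtop, hPt]
    congr 1
    congr 1
    exact integral_congr_ae (ae_of_all _ fun x => by
      simp only [Real.norm_eq_abs, abs_of_nonneg (hg0 x)])
  have hgsum : g = ((1 - t) • φ) + (t • ψ) := by
    ext x; simp [hgdef, smul_eq_mul]
  have htri : eLpNorm g P μ ≤
      ENNReal.ofReal (1 - t) * eLpNorm φ P μ + ENNReal.ofReal t * eLpNorm ψ P μ := by
    have m1 : AEStronglyMeasurable ((1 - t) • φ) μ :=
      (hφcont.const_smul (1 - t)).aestronglyMeasurable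
    have m2 : AEStronglyMeasurable (t • ψ) μ :=
      (hψcont.const_smul t).aestronglyMeasurable
    have tri := eLpNorm_add_le m1 m2 hP1
    rw [eLpNorm_const_smul, eLpNorm_const_smul] at tri
    rw [hgsum]
    refine tri.trans ?_
    gcongr
    · rw [← ofReal_norm, Real.norm_eq_abs, abs_of_nonneg ht0'.le]
    · rw [← ofReal_norm, Real.norm_eq_abs, abs_of_nonneg ht0.le]
  rw [heφ, heψ, heg] at htri
  have hA : (0:ℝ) ≤ (∫ x, φ x ^ p ∂μ) ^ p⁻¹ :=
    Real.rpow_nonneg (integral_nonneg fun x => Real.rpow_nonneg (hφ0 x) p) _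
  have hB : (0:ℝ) ≤ (∫ x, ψ x ^ p ∂μ) ^ p⁻¹ :=
    Real.rpow_nonneg (integral_nonneg fun x => Real.rpow_nonneg (hψ0 x) p) _
  rw [← ENNReal.ofReal_mul ht0'.le, ← ENNReal.ofReal_mul ht0.le,
    ← ENNReal.ofReal_add (mul_nonneg ht0'.le hA) (mul_nonneg ht0.le hB)] at htri
  exact (ENNReal.ofReal_le_ofReal_iff
    (add_nonneg (mul_nonneg ht0'.le hA) (mul_nonneg ht0.le hB))).1 htri
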